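/- arXiv:2305.08405 — 2 statements merged into one kernel-verified Lean document; each statement's English description precedes it below -/
import Mathlib

section
/- If G is a finite group and N is an abelian minimal normal subgroup of G, then for every non-identity element x in N, and any elements g₁,...,g_t of G whose images generate G/N, the set {g₁,...,g_t, x} generates G. In particular d(G) ≤ d(G/N) + 1. -/
/-- If `G` is a finite group and `N` is an abelian minimal normal subgroup of `G`, then for
every non-identity `x ∈ N` and any `g₁, …, g_t` whose images generate `G/N`, the set
`{g₁, …, g_t, x}` generates `G`; in particular `d(G) ≤ d(G/N) + 1`. -/
theorem stmt0 {G : Type*} [Group G] [Finite G] (N : Subgroup G) [N.Normal]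
    (hab : ∀ a b : N, a * b = b * a)
    (hne : N ≠ ⊥)
    (hmin : ∀ K : Subgroup G, K.Normal → K ≤ N → K = ⊥ ∨ K = N) :
    (∀ (x : G), x ∈ N → x ≠ 1 → ∀ (t : ℕ) (g : Fin t → G),
      Subgroup.closure (Set.range fun i => ((g i : G) : G ⧸ N)) = ⊤ →
      Subgroup.closure (Set.range g ∪ {x}) = ⊤) ∧
    Group.rank G ≤ Group.rank (G ⧸ N) + 1 := by
  have key : ∀ (x : G), x ∈ N → x ≠ 1 → ∀ (t : ℕ) (g : Fin t → G),
      Subgroup.closure (Set.range fun i => ((g i : G) : G ⧸ N)) = ⊤ →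
      Subgroup.closure (Set.range g ∪ {x}) = ⊤ := by
    intro x hx hx1 t g hgen
    set H := Subgroup.closure (Set.range g ∪ {x}) with hH
    have hxH : x ∈ H := Subgroup.subset_closure (Or.inr rfl)
    have hgH : ∀ i, g i ∈ H := fun i => Subgroup.subset_closure (Or.inl ⟨i, rfl⟩)
    -- H ⊔ N = ⊤
    have hmap : Subgroup.map (QuotientGroup.mk' N) H = ⊤ := by
      rw [eq_top_iff, ← hgen, Subgroup.closure_le]
      rintro _ ⟨i, rfl⟩
      exact ⟨g i, hgH i, rfl⟩
    have hsup : H ⊔ N = ⊤ := by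
      have := congrArg (Subgroup.comap (QuotientGroup.mk' N)) hmap
      rwa [Subgroup.comap_map_eq, QuotientGroup.ker_mk',
        Subgroup.comap_top (QuotientGroup.mk' N)] at this
    -- commutation in N
    have hcomm : ∀ a b : G, a ∈ N → b ∈ N → a * b = b * a := by
      intro a b ha hb
      exact congrArg Subtype.val (hab ⟨a, ha⟩ ⟨b, hb⟩)
    -- K := H ⊓ N is normal in G
    set K := H ⊓ N with hK
    have hKnorm : K.Normal := by
      constructor
      intro k hk c
      have hcmem : c ∈ H ⊔ N := hsup ▸ Subgroup.mem_top c
      rw [← SetLike.mem_coe, Subgroup.mul_normal] at hcmem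
      obtain ⟨h, hh, n, hn, rfl⟩ := hcmem
      have hnk : n * k * n⁻¹ = k := by
        rw [hcomm n k hn hk.2]; group
      have : h * n * k * (h * n)⁻¹ = h * k * h⁻¹ := by
        rw [mul_inv_rev, show h * n * k * (n⁻¹ * h⁻¹) = h * (n * k * n⁻¹) * h⁻¹ by group, hnk]
      rw [this]
      exact ⟨H.mul_mem (H.mul_mem hh hk.1) (H.inv_mem hh),
        Subgroup.Normal.conj_mem ‹N.Normal› k hk.2 h⟩
    have hKle : K ≤ N := inf_le_right
    have hKne : K ≠ ⊥ := by
      intro hbot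
      exact hx1 ((Subgroup.mem_bot).mp (hbot ▸ (⟨hxH, hx⟩ : x ∈ K)))
    have hKN : K = N := (hmin K hKnorm hKle).resolve_left hKne
    have hNle : N ≤ H := hKN ▸ (inf_le_left : K ≤ H)
    rw [eq_top_iff, ← hsup]
    exact sup_le le_rfl hNle
  refine ⟨key, ?_⟩
  classical
  obtain ⟨x', hx1⟩ := Subgroup.ne_bot_iff_exists_ne_one.mp hne
  obtain ⟨S, hScard, hSclos⟩ := Group.rank_spec (G ⧸ N)
  set t := S.card
  have hsurj := QuotientGroup.mk'_surjective N
  let e : Fin t ≃ {y // y ∈ S} := S.equivFin.symm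
  let g : Fin t → G := fun i => (hsurj (e i : G ⧸ N)).choose
  have hg : ∀ i, ((g i : G) : G ⧸ N) = (e i : G ⧸ N) := fun i => (hsurj (e i : G ⧸ N)).choose_spec
  have hrange : (Set.range fun i => ((g i : G) : G ⧸ N)) = (S : Set (G ⧸ N)) := by
    ext y
    constructor
    · rintro ⟨i, rfl⟩
      show ((g i : G) : G ⧸ N) ∈ (S : Set (G ⧸ N))
      rw [hg i]; exact (e i).2
    · intro hy
      refine ⟨e.symm ⟨y, hy⟩, ?_⟩
      show ((g (e.symm ⟨y, hy⟩) : G) : G ⧸ N) = y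
      rw [hg, Equiv.apply_symm_apply]
  have hgen : Subgroup.closure (Set.range fun i => ((g i : G) : G ⧸ N)) = ⊤ := by
    rw [hrange]; exact hSclos
  have hclos := key (x' : G) x'.2 (fun h => hx1 (Subtype.ext h)) t g hgen
  have : Subgroup.closure
      ((Finset.image g Finset.univ ∪ {(x' : G)} : Finset G) : Set G) = ⊤ := by
    rw [Finset.coe_union, Finset.coe_image, Finset.coe_univ, Set.image_univ,
      Finset.coe_singleton]
    exact hclos
  calc Group.rank G ≤ (Finset.image g Finset.univ ∪ {(x' : G)}).card := Group.rank_le this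
    _ ≤ (Finset.image g Finset.univ).card + ({(x' : G)} : Finset G).card :=
        Finset.card_union_le _ _
    _ ≤ t + 1 := by
        simp only [Finset.card_singleton]
        exact Nat.add_le_add_right (Finset.card_image_le.trans (by simp)) 1
    _ = Group.rank (G ⧸ N) + 1 := by rw [hScard]
end

section
/- (Gaschütz) Let G be a finite group and N a normal subgroup of G. If g₁,...,g_t are elements of G whose images generate G/N, and G can be generated by t elements, then there exist x₁,...,x_t ∈ N such that G = ⟨g₁x₁,...,g_tx_t⟩. -/
namespace GaschuetzAux

open Subgroup Finset Pointwise
open scoped Classical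
set_option linter.unusedSectionVars false

variable {G : Type*} [Group G] [Fintype G] [DecidableEq G]

noncomputable instance : Fintype (Subgroup G) := Fintype.ofFinite _

/-- Lifts `x` of `g` (mod `N`) with all `gᵢxᵢ` in `H`. -/
noncomputable def A (N H : Subgroup G) (t : ℕ) (g : Fin t → G) : Finset (Fin t → G) :=
  Finset.univ.filter fun x => (∀ i, x i ∈ N) ∧ ∀ i, g i * x i ∈ H

/-- Lifts `x` of `g` (mod `N`) with `⟨g₁x₁,…,gₜxₜ⟩ = H`. -/
noncomputable def B (N H : Subgroup G) (t : ℕ) (g : Fin t → G) : Finset (Fin t → G) :=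
  Finset.univ.filter fun x =>
    (∀ i, x i ∈ N) ∧ Subgroup.closure (Set.range fun i => g i * x i) = H

lemma mem_A {N H : Subgroup G} {t : ℕ} {g x : Fin t → G} :
    x ∈ A N H t g ↔ (∀ i, x i ∈ N) ∧ ∀ i, g i * x i ∈ H := by
  simp [A]

lemma mem_B {N H : Subgroup G} {t : ℕ} {g x : Fin t → G} :
    x ∈ B N H t g ↔
      (∀ i, x i ∈ N) ∧ Subgroup.closure (Set.range fun i => g i * x i) = H := by
  simp [B]

lemma A_eq_biUnion (N H : Subgroup G) (t : ℕ) (g : Fin t → G) :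
    A N H t g = (Finset.univ.filter (· ≤ H)).biUnion (fun K => B N K t g) := by
  classical
  ext x
  simp only [Finset.mem_biUnion, Finset.mem_filter, Finset.mem_univ, true_and, mem_A, mem_B]
  constructor
  · rintro ⟨hxN, hxH⟩
    refine ⟨Subgroup.closure (Set.range fun i => g i * x i), ?_, hxN, rfl⟩
    rw [Subgroup.closure_le]
    rintro _ ⟨i, rfl⟩
    exact hxH i
  · rintro ⟨K, hKH, hxN, hK⟩
    refine ⟨hxN, fun i => hKH ?_⟩
    rw [← hK]
    exact Subgroup.subset_closure ⟨i, rfl⟩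

lemma card_A_eq_sum (N H : Subgroup G) (t : ℕ) (g : Fin t → G) :
    (A N H t g).card = ∑ K ∈ Finset.univ.filter (· ≤ H), (B N K t g).card := by
  classical
  rw [A_eq_biUnion]
  refine Finset.card_biUnion ?_
  intro K _ K' _ hne
  show Disjoint (B N K t g) (B N K' t g)
  rw [Finset.disjoint_left]
  intro x hx hx'
  exact hne ((mem_B.mp hx).2 ▸ (mem_B.mp hx').2 ▸ rfl)

/-- If `H ⊔ N = ⊤`, the number of lifts landing in `H` does not depend on `g`. -/
lemma card_A_eq (N H : Subgroup G) [N.Normal] (t : ℕ) (g g' : Fin t → G)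
    (hHN : H ⊔ N = ⊤) : (A N H t g).card = (A N H t g').card := by
  classical
  have hmem : ∀ y : G, ∃ h ∈ H, ∃ n ∈ N, h * n = y := by
    intro y
    have : y ∈ ((H : Set G) * (N : Set G)) := by
      rw [← Subgroup.mul_normal, hHN]; exact Subgroup.mem_top y
    simpa [Set.mem_mul] using this
  choose h hh n hn hhn using fun i => hmem (g i)
  choose h' hh' n' hn' hhn' using fun i => hmem (g' i)
  refine Finset.card_bij' (fun x _ => fun i => (n' i)⁻¹ * n i * x i)
    (fun x _ => fun i => (n i)⁻¹ * n' i * x i) ?_ ?_ ?_ ?_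
  · intro x hx
    obtain ⟨hxN, hxH⟩ := mem_A.mp hx
    refine mem_A.mpr ⟨fun i => mul_mem (mul_mem (inv_mem (hn' i)) (hn i)) (hxN i), fun i => ?_⟩
    have key : g' i * ((n' i)⁻¹ * n i * x i) = h' i * ((h i)⁻¹ * (g i * x i)) := by
      rw [← hhn i, ← hhn' i]; group
    rw [key]
    exact mul_mem (hh' i) (mul_mem (inv_mem (hh i)) (hxH i))
  · intro x hx
    obtain ⟨hxN, hxH⟩ := mem_A.mp hx
    refine mem_A.mpr ⟨fun i => mul_mem (mul_mem (inv_mem (hn i)) (hn' i)) (hxN i), fun i => ?_⟩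
    have key : g i * ((n i)⁻¹ * n' i * x i) = h i * ((h' i)⁻¹ * (g' i * x i)) := by
      rw [← hhn i, ← hhn' i]; group
    rw [key]
    exact mul_mem (hh i) (mul_mem (inv_mem (hh' i)) (hxH i))
  · intro x _; funext i; group
  · intro x _; funext i; group

/-- If `H ⊔ N ≠ ⊤` but the images of `g` generate `G ⧸ N`, there are no lifts in `H`. -/
lemma A_eq_empty (N H : Subgroup G) [N.Normal] (t : ℕ) (g : Fin t → G)
    (hgen : Subgroup.closure (Set.range fun i => ((g i : G) : G ⧸ N)) = ⊤)
    (hHN : H ⊔ N ≠ ⊤) : A N H t g = ∅ := by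
  classical
  rw [Finset.eq_empty_iff_forall_notMem]
  intro x hx
  obtain ⟨hxN, hxH⟩ := mem_A.mp hx
  apply hHN
  have h1 : ∀ i, g i ∈ H ⊔ N := by
    intro i
    have : g i = (g i * x i) * (x i)⁻¹ := by group
    rw [this]
    exact mul_mem (Subgroup.mem_sup_left (hxH i)) (Subgroup.mem_sup_right (inv_mem (hxN i)))
  have h2 : Subgroup.map (QuotientGroup.mk' N) (H ⊔ N) = ⊤ := by
    rw [eq_top_iff, ← hgen, Subgroup.closure_le]
    rintro _ ⟨i, rfl⟩
    exact ⟨g i, h1 i, rfl⟩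
  have h3 := Subgroup.comap_map_eq (QuotientGroup.mk' N) (H ⊔ N)
  rw [h2, QuotientGroup.ker_mk', Subgroup.comap_top, sup_assoc, sup_idem] at h3
  exact h3.symm

lemma B_subset_A (N H : Subgroup G) (t : ℕ) (g : Fin t → G) :
    B N H t g ⊆ A N H t g := by
  intro x hx
  obtain ⟨hxN, hxH⟩ := mem_B.mp hx
  exact mem_A.mpr ⟨hxN, fun i => hxH ▸ Subgroup.subset_closure ⟨i, rfl⟩⟩

lemma filter_le_eq_insert (H : Subgroup G) :
    (Finset.univ.filter (· ≤ H) : Finset (Subgroup G))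
      = insert H (Finset.univ.filter (· < H)) := by
  classical
  ext K
  simp only [Finset.mem_filter, Finset.mem_univ, true_and, Finset.mem_insert]
  constructor
  · intro hK
    rcases eq_or_lt_of_le hK with h | h
    · exact Or.inl h
    · exact Or.inr h
  · rintro (rfl | h)
    · exact le_refl _
    · exact le_of_lt h

/-- The key counting lemma: the number of lifts generating `H` (with `H ⊔ N = ⊤`)
does not depend on the choice of `g` with images generating `G ⧸ N`. -/
lemma card_B_eq (N : Subgroup G) [N.Normal] (t : ℕ) :
    ∀ m (H : Subgroup G), Nat.card H ≤ m → ∀ g g' : Fin t → G,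
      Subgroup.closure (Set.range fun i => ((g i : G) : G ⧸ N)) = ⊤ →
      Subgroup.closure (Set.range fun i => ((g' i : G) : G ⧸ N)) = ⊤ →
      H ⊔ N = ⊤ → (B N H t g).card = (B N H t g').card := by
  classical
  intro m
  induction m with
  | zero =>
      intro H hH
      have : 0 < Nat.card H := Nat.card_pos
      omega
  | succ m ih =>
      intro H hH g g' hg hg' hHN
      have hsum : ∀ gg : Fin t → G,
          (A N H t gg).card
            = (B N H t gg).card + ∑ K ∈ Finset.univ.filter (· < H), (B N K t gg).card := by
        intro gg
        rw [card_A_eq_sum, filter_le_eq_insert, Finset.sum_insert]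
        simp only [Finset.mem_filter, Finset.mem_univ, true_and]
        exact lt_irrefl H
      have hA := card_A_eq N H t g g' hHN
      rw [hsum g, hsum g'] at hA
      have hS : ∑ K ∈ Finset.univ.filter (· < H), (B N K t g).card
          = ∑ K ∈ Finset.univ.filter (· < H), (B N K t g').card := by
        refine Finset.sum_congr rfl ?_
        intro K hK
        have hKH : K < H := by
          simpa using (Finset.mem_filter.mp hK).2
        by_cases hKN : K ⊔ N = ⊤
        · refine ih K ?_ g g' hg hg' hKN
          have hlt : Nat.card K < Nat.card H := by
            have hss : (K : Set G) ⊂ (H : Set G) := by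
              exact_mod_cast hKH
            have := Set.Finite.card_lt_card (Set.toFinite (H : Set G)) hss
            simpa [Nat.card_coe_set_eq] using this
          omega
        · have e1 : B N K t g = ∅ :=
            Finset.subset_empty.mp (A_eq_empty N K t g hg hKN ▸ B_subset_A N K t g)
          have e2 : B N K t g' = ∅ :=
            Finset.subset_empty.mp (A_eq_empty N K t g' hg' hKN ▸ B_subset_A N K t g')
          rw [e1, e2]
      omega

end GaschuetzAux

/-- Gaschütz: if the images of `g₁, …, g_t` generate `G/N` and `G` can be generated by `t`
elements, then there exist `x₁, …, x_t ∈ N` with `G = ⟨g₁x₁, …, g_tx_t⟩`. -/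
theorem stmt2 {G : Type*} [Group G] [Finite G] (N : Subgroup G) [N.Normal]
    (t : ℕ) (g : Fin t → G)
    (hgen : Subgroup.closure (Set.range fun i => ((g i : G) : G ⧸ N)) = ⊤)
    (hd : Group.rank G ≤ t) :
    ∃ x : Fin t → G, (∀ i, x i ∈ N) ∧
      Subgroup.closure (Set.range fun i => g i * x i) = ⊤ := by
  classical
  letI : Fintype G := Fintype.ofFinite G
  obtain ⟨S, hScard, hSgen⟩ := Group.rank_spec G
  -- build a generating tuple `g'` of length `t`
  have hlen : S.toList.length ≤ t := by
    rw [Finset.length_toList, hScard]; exact hd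
  set g' : Fin t → G := fun i => S.toList.getD i 1 with hg'def
  have hSsub : (S : Set G) ⊆ Set.range g' := by
    intro s hs
    have hmem : s ∈ S.toList := by
      rw [Finset.mem_toList]; exact_mod_cast hs
    obtain ⟨j, hj, hjs⟩ := List.getElem_of_mem hmem
    refine ⟨⟨j, lt_of_lt_of_le hj hlen⟩, ?_⟩
    simp only [hg'def]
    rw [List.getD_eq_getElem _ _ hj]
    exact hjs
  have hg'top : Subgroup.closure (Set.range g') = ⊤ := by
    rw [eq_top_iff, ← hSgen]
    exact Subgroup.closure_mono hSsub
  have hg'gen : Subgroup.closure (Set.range fun i => ((g' i : G) : G ⧸ N)) = ⊤ := by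
    have : (Set.range fun i => ((g' i : G) : G ⧸ N))
        = (QuotientGroup.mk' N) '' (Set.range g') := by
      rw [← Set.range_comp]; rfl
    rw [this, ← MonoidHom.map_closure, hg'top]
    rw [eq_top_iff]
    rintro y -
    obtain ⟨z, rfl⟩ := QuotientGroup.mk'_surjective N y
    exact ⟨z, trivial, rfl⟩
  have hkey := GaschuetzAux.card_B_eq N t (Nat.card (⊤ : Subgroup G)) ⊤ le_rfl g g'
    hgen hg'gen (by simp)
  have hmem1 : (fun _ : Fin t => (1 : G)) ∈ GaschuetzAux.B N ⊤ t g' := by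
    refine GaschuetzAux.mem_B.mpr ⟨fun i => one_mem N, ?_⟩
    simpa using hg'top
  have hpos : 0 < (GaschuetzAux.B N ⊤ t g).card := by
    rw [hkey]
    exact Finset.card_pos.mpr ⟨_, hmem1⟩
  obtain ⟨x, hx⟩ := Finset.card_pos.mp hpos
  obtain ⟨hxN, hxtop⟩ := GaschuetzAux.mem_B.mp hx
  exact ⟨x, hxN, hxtop⟩
end
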